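/- Let V be a real inner product space of dimension n, and for X, Y ∈ V let X∧Y denote the skew-symmetric endomorphism Z ↦ ⟨Y,Z⟩X − ⟨X,Z⟩Y. If X, Y are orthonormal and F is a skew-symmetric endomorphism of V, then the Hilbert–Schmidt norm satisfies ‖[X∧Y, F]‖² = 2‖F(Y)‖² + 2‖F(X)‖² − 4⟨F(X),Y⟩², where [A,B] = A∘B − B∘A. -/

import Mathlib

/-- The skew-symmetric endomorphism `X ∧ Y : Z ↦ ⟨Y,Z⟩X − ⟨X,Z⟩Y`. -/
noncomputable def wedge {V : Type*} [NormedAddCommGroup V] [InnerProductSpace ℝ V]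
    (X Y : V) : V → V :=
  fun Z => (inner ℝ Y Z : ℝ) • X - (inner ℝ X Z : ℝ) • Y

/-- Commutator of two endomorphisms (as plain functions). -/
def commut {V : Type*} [AddCommGroup V] (A B : V → V) : V → V := fun Z => A (B Z) - B (A Z)

theorem stmt_7 {V : Type*} [NormedAddCommGroup V] [InnerProductSpace ℝ V]
    [FiniteDimensional ℝ V] {n : ℕ} (b : OrthonormalBasis (Fin n) ℝ V)
    (X Y : V) (hX : ‖X‖ = 1) (hY : ‖Y‖ = 1) (hXY : (inner ℝ X Y : ℝ) = 0)
    (F : V →ₗ[ℝ] V) (hF : ∀ u v : V, (inner ℝ (F u) v : ℝ) = -(inner ℝ u (F v) : ℝ)) :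
    ∑ i, ‖commut (wedge X Y) F (b i)‖ ^ 2
      = 2 * ‖F Y‖ ^ 2 + 2 * ‖F X‖ ^ 2 - 4 * (inner ℝ (F X) Y : ℝ) ^ 2 := by
  have hYX : (inner ℝ Y X : ℝ) = 0 := by rw [real_inner_comm]; exact hXY
  have hFXX : (inner ℝ (F X) X : ℝ) = 0 := by
    have h := hF X X
    have h2 := real_inner_comm X (F X)
    linarith [h, h2]
  have hFYY : (inner ℝ (F Y) Y : ℝ) = 0 := by
    have h := hF Y Y
    have h2 := real_inner_comm Y (F Y)
    linarith [h, h2]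
  have hFYX : (inner ℝ (F Y) X : ℝ) = -(inner ℝ (F X) Y : ℝ) := by
    rw [hF Y X, real_inner_comm]
  have hw : ∀ z : V, commut (wedge X Y) F z =
      (inner ℝ (F X) z : ℝ) • Y - (inner ℝ (F Y) z : ℝ) • X
        - (inner ℝ Y z : ℝ) • F X + (inner ℝ X z : ℝ) • F Y := by
    intro z
    have h1 : (inner ℝ Y (F z) : ℝ) = -(inner ℝ (F Y) z : ℝ) := by
      have := hF Y z; linarith
    have h2 : (inner ℝ X (F z) : ℝ) = -(inner ℝ (F X) z : ℝ) := by
      have := hF X z; linarith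
    simp only [commut, wedge, map_sub, map_smul, h1, h2]
    module
  have expand : ∀ z : V, ‖commut (wedge X Y) F z‖ ^ 2 =
      ((inner ℝ (F X) z : ℝ) * (inner ℝ (F X) z : ℝ))
      + ((inner ℝ (F Y) z : ℝ) * (inner ℝ (F Y) z : ℝ))
      + ((inner ℝ Y z : ℝ) * (inner ℝ Y z : ℝ)) * ‖F X‖ ^ 2
      + ((inner ℝ X z : ℝ) * (inner ℝ X z : ℝ)) * ‖F Y‖ ^ 2
      - ((inner ℝ (F X) z : ℝ) * (inner ℝ Y z : ℝ)) * (2 * (inner ℝ (F X) Y : ℝ))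
      + ((inner ℝ (F Y) z : ℝ) * (inner ℝ X z : ℝ)) * (2 * (inner ℝ (F X) Y : ℝ))
      - ((inner ℝ Y z : ℝ) * (inner ℝ X z : ℝ)) * (2 * (inner ℝ (F X) (F Y) : ℝ)) := by
    intro z
    rw [hw z, ← real_inner_self_eq_norm_sq]
    simp only [inner_sub_left, inner_sub_right, inner_add_left, inner_add_right,
      real_inner_smul_left, real_inner_smul_right]
    have hXX : (inner ℝ X X : ℝ) = 1 := by
      rw [real_inner_self_eq_norm_sq, hX]; norm_num
    have hYY : (inner ℝ Y Y : ℝ) = 1 := by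
      rw [real_inner_self_eq_norm_sq, hY]; norm_num
    have hFXFX : (inner ℝ (F X) (F X) : ℝ) = ‖F X‖ ^ 2 := real_inner_self_eq_norm_sq _
    have hFYFY : (inner ℝ (F Y) (F Y) : ℝ) = ‖F Y‖ ^ 2 := real_inner_self_eq_norm_sq _
    have hYFX : (inner ℝ Y (F X) : ℝ) = (inner ℝ (F X) Y : ℝ) := real_inner_comm _ _
    have hXFY : (inner ℝ X (F Y) : ℝ) = -(inner ℝ (F X) Y : ℝ) := by
      rw [real_inner_comm]; exact hFYX
    have hXFX : (inner ℝ X (F X) : ℝ) = 0 := by rw [real_inner_comm]; exact hFXX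
    have hYFY : (inner ℝ Y (F Y) : ℝ) = 0 := by rw [real_inner_comm]; exact hFYY
    have hFYFX : (inner ℝ (F Y) (F X) : ℝ) = (inner ℝ (F X) (F Y) : ℝ) := real_inner_comm _ _
    rw [hXX, hYY, hFXFX, hFYFY, hYFX, hXFY, hXFX, hYFY, hFYFX, hXY, hYX, hFXX, hFYY, hFYX]
    ring
  have key : ∀ u v : V, ∑ i, (inner ℝ u (b i) : ℝ) * (inner ℝ v (b i) : ℝ) = (inner ℝ u v : ℝ) := by
    intro u v
    have h := b.sum_inner_mul_inner u v
    calc ∑ i, (inner ℝ u (b i) : ℝ) * (inner ℝ v (b i) : ℝ)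
        = ∑ i, (inner ℝ u (b i) : ℝ) * (inner ℝ (b i) v : ℝ) := by
          refine Finset.sum_congr rfl fun i _ => ?_
          rw [real_inner_comm v (b i)]
      _ = (inner ℝ u v : ℝ) := h
  calc ∑ i, ‖commut (wedge X Y) F (b i)‖ ^ 2
      = ∑ i, (((inner ℝ (F X) (b i) : ℝ) * (inner ℝ (F X) (b i) : ℝ))
      + ((inner ℝ (F Y) (b i) : ℝ) * (inner ℝ (F Y) (b i) : ℝ))
      + ((inner ℝ Y (b i) : ℝ) * (inner ℝ Y (b i) : ℝ)) * ‖F X‖ ^ 2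
      + ((inner ℝ X (b i) : ℝ) * (inner ℝ X (b i) : ℝ)) * ‖F Y‖ ^ 2
      - ((inner ℝ (F X) (b i) : ℝ) * (inner ℝ Y (b i) : ℝ)) * (2 * (inner ℝ (F X) Y : ℝ))
      + ((inner ℝ (F Y) (b i) : ℝ) * (inner ℝ X (b i) : ℝ)) * (2 * (inner ℝ (F X) Y : ℝ))
      - ((inner ℝ Y (b i) : ℝ) * (inner ℝ X (b i) : ℝ)) * (2 * (inner ℝ (F X) (F Y) : ℝ))) :=
        Finset.sum_congr rfl fun i _ => expand (b i)
    _ = 2 * ‖F Y‖ ^ 2 + 2 * ‖F X‖ ^ 2 - 4 * (inner ℝ (F X) Y : ℝ) ^ 2 := by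
        simp only [Finset.sum_add_distrib, Finset.sum_sub_distrib, ← Finset.sum_mul]
        rw [key (F X) (F X), key (F Y) (F Y), key Y Y, key X X, key (F X) Y, key (F Y) X,
          key Y X]
        rw [real_inner_self_eq_norm_sq (F X), real_inner_self_eq_norm_sq (F Y),
          real_inner_self_eq_norm_sq Y, real_inner_self_eq_norm_sq X, hX, hY, hYX, hFYX]
        ring
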